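/- The null point location x₀ = (1/ψ)·artanh((cosh(ψL) − 1)/(sinh(ψL) + k_b/(Eψ))) satisfies x₀ ≤ L/2, with equality if and only if k_b = 0. -/

import Mathlib

/-- Real inverse hyperbolic tangent. -/
noncomputable def artanh (y : ℝ) : ℝ := (1 / 2) * Real.log ((1 + y) / (1 - y))

lemma artanh_lt_artanh {y y' : ℝ} (h0 : -1 < y) (h : y < y') (h1 : y' < 1) :
    artanh y < artanh y' := by
  unfold artanh
  have hy1 : (0:ℝ) < 1 - y := by linarith
  have hy1' : (0:ℝ) < 1 - y' := by linarith
  have hp : (0:ℝ) < (1 + y) / (1 - y) := div_pos (by linarith) hy1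
  have hlog : Real.log ((1 + y) / (1 - y)) < Real.log ((1 + y') / (1 - y')) := by
    apply Real.log_lt_log hp
    rw [div_lt_div_iff₀ hy1 hy1']
    nlinarith
  linarith

lemma artanh_half (a : ℝ) (ha : 0 < a) :
    artanh ((Real.cosh a - 1) / Real.sinh a) = a / 2 := by
  have hs : 0 < Real.sinh a := Real.sinh_pos_iff.2 ha
  have hne : Real.sinh a ≠ 0 := ne_of_gt hs
  have h3 : 0 < 1 - Real.exp (-a) := by
    have := Real.exp_lt_one_iff.2 (by linarith : -a < 0); linarith
  have key : (1 + (Real.cosh a - 1) / Real.sinh a) / (1 - (Real.cosh a - 1) / Real.sinh a)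
      = Real.exp a := by
    have h1 : Real.sinh a + Real.cosh a - 1 = Real.exp a - 1 := by
      rw [Real.sinh_eq, Real.cosh_eq]; ring
    have h2 : Real.sinh a - Real.cosh a + 1 = 1 - Real.exp (-a) := by
      rw [Real.sinh_eq, Real.cosh_eq]; ring
    have e1 : 1 + (Real.cosh a - 1) / Real.sinh a
        = (Real.sinh a + Real.cosh a - 1) / Real.sinh a := by field_simp; linarith [h1]
    have e2 : 1 - (Real.cosh a - 1) / Real.sinh a
        = (Real.sinh a - Real.cosh a + 1) / Real.sinh a := by field_simp; linarith [h2]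
    rw [e1, e2, div_div_div_cancel_right₀ hne _ _, h1, h2, div_eq_iff (ne_of_gt h3),
      mul_sub, ← Real.exp_add, add_neg_cancel, Real.exp_zero, mul_one]
  unfold artanh
  rw [key, Real.log_exp]; ring

theorem null_point_at_most_mid_depth
    (ψ E L kb : ℝ) (hψ : 0 < ψ) (hE : 0 < E) (hL : 0 < L) (hkb : 0 ≤ kb) :
    let x₀ : ℝ := (1 / ψ) *
      artanh ((Real.cosh (ψ * L) - 1) / (Real.sinh (ψ * L) + kb / (E * ψ)))
    x₀ ≤ L / 2 ∧ (x₀ = L / 2 ↔ kb = 0) := by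
  intro x₀
  set a : ℝ := ψ * L with ha_def
  have ha : 0 < a := mul_pos hψ hL
  have hs : 0 < Real.sinh a := Real.sinh_pos_iff.2 ha
  have hch : 1 < Real.cosh a := Real.one_lt_cosh.2 (ne_of_gt ha)
  have hc : 0 ≤ kb / (E * ψ) := div_nonneg hkb (le_of_lt (mul_pos hE hψ))
  set c : ℝ := kb / (E * ψ) with hc_def
  -- the reference value y* = (cosh a - 1)/sinh a, with artanh y* = a/2
  set y' : ℝ := (Real.cosh a - 1) / Real.sinh a with hy'_def
  set y : ℝ := (Real.cosh a - 1) / (Real.sinh a + c) with hy_def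
  have hy'1 : y' < 1 := by
    rw [hy'_def, div_lt_one hs]
    have h2 : Real.cosh a - Real.sinh a = Real.exp (-a) := by
      rw [Real.sinh_eq, Real.cosh_eq]; ring
    have := Real.exp_lt_one_iff.2 (by linarith : -a < 0)
    linarith
  have hy0 : 0 ≤ y := div_nonneg (by linarith) (by linarith)
  have hyle : y ≤ y' := by
    rw [hy_def, hy'_def]
    gcongr
    all_goals linarith
  have half : artanh y' = a / 2 := artanh_half a ha
  have hL2 : (1 / ψ) * (a / 2) = L / 2 := by
    field_simp [ha_def]
    exact ha_def
  constructor
  · have : artanh y ≤ artanh y' := by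
      rcases eq_or_lt_of_le hyle with h | h
      · rw [h]
      · exact le_of_lt (artanh_lt_artanh (by linarith) h hy'1)
    calc x₀ = (1 / ψ) * artanh y := rfl
      _ ≤ (1 / ψ) * artanh y' := by
          apply mul_le_mul_of_nonneg_left this (by positivity)
      _ = L / 2 := by rw [half, hL2]
  · constructor
    · intro hx
      by_contra hkb0
      have hkbpos : 0 < kb := lt_of_le_of_ne hkb (Ne.symm hkb0)
      have hcpos : 0 < c := div_pos hkbpos (mul_pos hE hψ)
      have hylt : y < y' := by
        rw [hy_def, hy'_def]
        exact div_lt_div_of_pos_left (by linarith) hs (by linarith)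
      have : artanh y < artanh y' := artanh_lt_artanh (by linarith) hylt hy'1
      have hx' : (1 / ψ) * artanh y < (1 / ψ) * artanh y' :=
        mul_lt_mul_of_pos_left this (by positivity)
      rw [half, hL2] at hx'
      exact absurd hx (ne_of_lt hx')
    · intro hkb0
      have hc0 : c = 0 := by rw [hc_def, hkb0]; simp
      have : y = y' := by rw [hy_def, hy'_def, hc0, add_zero]
      show (1 / ψ) * artanh y = L / 2
      rw [this, half, hL2]
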